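/- arXiv:1208.2064 — 3 statements merged into one kernel-verified Lean document; each statement's English description precedes it below -/
import Mathlib

section
/- For the scalar SDE dX(t) = −dt + X(t)dW(t), X(0) = 2T, the solution is X(t) = e^{−t/2 + W(t)} (2T − ∫₀^t e^{s/2 − W(s)} ds), and X(t) < 0 holds on the event { −(1/t)∫₀^t W(s) ds ≥ log(2T/t) }, which has positive probability; hence P(X(t) < 0) > 0 for each t ∈ (0,T]. -/
open MeasureTheory ProbabilityTheory Set intervalIntegral

/-- A standard one-dimensional Brownian motion on a probability space. -/
structure IsStandardBrownianMotion {Ω : Type*} [MeasurableSpace Ω]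
    (P : Measure Ω) (W : ℝ → Ω → ℝ) : Prop where
  measurable : ∀ t, Measurable (W t)
  cont_paths : ∀ ω, Continuous fun t => W t ω
  init : ∀ ω, W 0 ω = 0
  gauss_incr : ∀ s t : ℝ, 0 ≤ s → s ≤ t →
    P.map (fun ω => W t ω - W s ω) = gaussianReal 0 (Real.toNNReal (t - s))
  indep_incr : ∀ s t u v : ℝ, 0 ≤ s → s ≤ t → t ≤ u → u ≤ v →
    IndepFun (fun ω => W t ω - W s ω) (fun ω => W v ω - W u ω) P

/-- The explicit solution of `dX(t) = −dt + X(t) dW(t)`, `X(0) = 2T`, given by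
the variation-of-constants formula. -/
noncomputable def solutionX {Ω : Type*} (W : ℝ → Ω → ℝ) (T t : ℝ) (ω : Ω) : ℝ :=
  Real.exp (-t / 2 + W t ω) *
    (2 * T - ∫ s in (0:ℝ)..t, Real.exp (s / 2 - W s ω))


section SDEAuxSection

open Real
open scoped NNReal ENNReal

namespace SDEAux


lemma pdf_tilt (a : ℝ) {v : ℝ≥0} (hv : v ≠ 0) (x : ℝ) :
    Real.exp (a * x) * gaussianPDFReal 0 v x
      = Real.exp (a ^ 2 * v / 2) * gaussianPDFReal (a * v) v x := by
  have hv' : (0:ℝ) < (v:ℝ) := by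
    have := v.coe_nonneg
    rcases this.lt_or_eq with h | h
    · exact h
    · exact absurd (by exact_mod_cast h.symm) hv
  have key : a * x + -(x - 0) ^ 2 / (2 * (v:ℝ))
      = a ^ 2 * (v:ℝ) / 2 + -(x - a * (v:ℝ)) ^ 2 / (2 * (v:ℝ)) := by
    field_simp
    ring
  simp only [gaussianPDFReal]
  rw [mul_left_comm, ← Real.exp_add, key, mul_left_comm, ← Real.exp_add]

lemma pdf_even (v : ℝ≥0) (x : ℝ) : gaussianPDFReal 0 v (-x) = gaussianPDFReal 0 v x := by
  simp [gaussianPDFReal, neg_sq]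

lemma integrable_id_mul_pdf0 (v : ℝ≥0) :
    Integrable (fun y : ℝ => y * gaussianPDFReal 0 v y) := by
  by_cases hv : v = 0
  · simp [hv]
  have hv' : (0:ℝ) < (v:ℝ) := by
    have := v.coe_nonneg
    rcases this.lt_or_eq with h | h
    · exact h
    · exact absurd (by exact_mod_cast h.symm) hv
  have h : (fun y : ℝ => y * gaussianPDFReal 0 v y)
      = fun y => (√(2 * π * v))⁻¹ * (y * Real.exp (-(2 * (v:ℝ))⁻¹ * y ^ 2)) := by
    funext y
    have : -(y - 0) ^ 2 / (2 * (v:ℝ)) = -(2 * (v:ℝ))⁻¹ * y ^ 2 := by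
      field_simp
      ring
    rw [gaussianPDFReal, this]
    ring
  rw [h]
  exact (integrable_mul_exp_neg_mul_sq (by positivity)).const_mul _

lemma integral_id_mul_pdf0 (v : ℝ≥0) : ∫ y : ℝ, y * gaussianPDFReal 0 v y = 0 := by
  have h1 : ∫ y : ℝ, (-y) * gaussianPDFReal 0 v (-y) = ∫ y : ℝ, y * gaussianPDFReal 0 v y :=
    integral_neg_eq_self (μ := volume) (fun y : ℝ => y * gaussianPDFReal 0 v y)
  have h2 : (fun y : ℝ => (-y) * gaussianPDFReal 0 v (-y))
      = fun y : ℝ => -(y * gaussianPDFReal 0 v y) := by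
    funext y; rw [pdf_even]; ring
  rw [h2, MeasureTheory.integral_neg] at h1
  linarith

lemma integrable_id_mul_pdf (m : ℝ) (v : ℝ≥0) :
    Integrable (fun x : ℝ => x * gaussianPDFReal m v x) := by
  have h0 : Integrable (fun y : ℝ => (y + m) * gaussianPDFReal 0 v y) := by
    have : (fun y : ℝ => (y + m) * gaussianPDFReal 0 v y)
        = fun y => y * gaussianPDFReal 0 v y + m * gaussianPDFReal 0 v y := by
      funext y; ring
    rw [this]
    exact (integrable_id_mul_pdf0 v).add ((integrable_gaussianPDFReal 0 v).const_mul m)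
  have h1 := h0.comp_sub_right m
  have h2 : (fun x : ℝ => (x - m + m) * gaussianPDFReal 0 v (x - m))
      = fun x : ℝ => x * gaussianPDFReal m v x := by
    funext x
    rw [gaussianPDFReal_sub, sub_add_cancel, zero_add]
  rwa [h2] at h1

lemma integral_id_mul_pdf (m : ℝ) {v : ℝ≥0} (hv : v ≠ 0) :
    ∫ x : ℝ, x * gaussianPDFReal m v x = m := by
  have h := integral_add_right_eq_self (μ := volume) (fun x : ℝ => x * gaussianPDFReal m v x) m
  have h2 : (fun x : ℝ => (x + m) * gaussianPDFReal m v (x + m))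
      = fun x : ℝ => x * gaussianPDFReal 0 v x + m * gaussianPDFReal 0 v x := by
    funext x
    rw [gaussianPDFReal_add, sub_self]
    ring
  rw [h2] at h
  rw [← h, integral_add (integrable_id_mul_pdf0 v) ((integrable_gaussianPDFReal 0 v).const_mul m),
    integral_id_mul_pdf0, MeasureTheory.integral_const_mul, integral_gaussianPDFReal_eq_one 0 hv]
  ring


lemma integrable_dirac0 {f : ℝ → ℝ} (hf : Measurable f) :
    Integrable f (Measure.dirac (0:ℝ)) :=
  ⟨hf.aestronglyMeasurable, by
    rw [HasFiniteIntegral, lintegral_dirac]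
    exact ENNReal.coe_lt_top⟩

lemma gaussianReal_integral_eq (v : ℝ≥0) (hv : v ≠ 0) (g : ℝ → ℝ) :
    ∫ x, g x ∂(gaussianReal 0 v) = ∫ x, gaussianPDFReal 0 v x * g x := by
  rw [gaussianReal_of_var_ne_zero _ hv, gaussianPDF_def]
  simp only [ENNReal.ofReal]
  rw [integral_withDensity_eq_integral_smul
    (f := fun x => (gaussianPDFReal 0 v x).toNNReal)
    ((measurable_gaussianPDFReal 0 v).real_toNNReal) g]
  congr 1
  funext x
  rw [NNReal.smul_def, smul_eq_mul, Real.coe_toNNReal _ (gaussianPDFReal_nonneg 0 v x)]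

lemma gaussianReal_integrable_iff (v : ℝ≥0) (hv : v ≠ 0) (g : ℝ → ℝ) :
    Integrable g (gaussianReal 0 v) ↔
      Integrable (fun x => gaussianPDFReal 0 v x * g x) volume := by
  rw [gaussianReal_of_var_ne_zero _ hv, gaussianPDF_def]
  simp only [ENNReal.ofReal]
  rw [integrable_withDensity_iff_integrable_smul
    (f := fun x => (gaussianPDFReal 0 v x).toNNReal)
    ((measurable_gaussianPDFReal 0 v).real_toNNReal)]
  constructor <;> intro h <;> refine h.congr (Filter.Eventually.of_forall fun x => ?_) <;>
    simp only [NNReal.smul_def, smul_eq_mul, Real.coe_toNNReal _ (gaussianPDFReal_nonneg 0 v x)]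

lemma integrable_exp_gaussianReal (a : ℝ) (v : ℝ≥0) :
    Integrable (fun x => Real.exp (a * x)) (gaussianReal 0 v) := by
  by_cases hv : v = 0
  · rw [hv, gaussianReal_zero_var]
    exact integrable_dirac0 (by fun_prop)
  rw [gaussianReal_integrable_iff v hv]
  have h : (fun x => gaussianPDFReal 0 v x * Real.exp (a * x))
      = fun x => Real.exp (a ^ 2 * v / 2) * gaussianPDFReal (a * v) v x := by
    funext x; rw [mul_comm, pdf_tilt a hv]
  rw [h]
  exact (integrable_gaussianPDFReal _ _).const_mul _

lemma integral_exp_gaussianReal (a : ℝ) (v : ℝ≥0) :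
    ∫ x, Real.exp (a * x) ∂(gaussianReal 0 v) = Real.exp (a ^ 2 * v / 2) := by
  by_cases hv : v = 0
  · rw [hv, gaussianReal_zero_var, integral_dirac]
    norm_num
  rw [gaussianReal_integral_eq v hv]
  have h : (fun x => gaussianPDFReal 0 v x * Real.exp (a * x))
      = fun x => Real.exp (a ^ 2 * v / 2) * gaussianPDFReal (a * v) v x := by
    funext x; rw [mul_comm, pdf_tilt a hv]
  rw [h, MeasureTheory.integral_const_mul, integral_gaussianPDFReal_eq_one _ hv, mul_one]

lemma integrable_id_mul_exp_gaussianReal (a : ℝ) (v : ℝ≥0) :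
    Integrable (fun x => x * Real.exp (a * x)) (gaussianReal 0 v) := by
  by_cases hv : v = 0
  · rw [hv, gaussianReal_zero_var]
    exact integrable_dirac0 (by fun_prop)
  rw [gaussianReal_integrable_iff v hv]
  have h : (fun x => gaussianPDFReal 0 v x * (x * Real.exp (a * x)))
      = fun x => Real.exp (a ^ 2 * v / 2) * (x * gaussianPDFReal (a * v) v x) := by
    funext x
    have := pdf_tilt a hv x
    calc gaussianPDFReal 0 v x * (x * Real.exp (a * x))
        = x * (Real.exp (a * x) * gaussianPDFReal 0 v x) := by ring
      _ = x * (Real.exp (a ^ 2 * v / 2) * gaussianPDFReal (a * v) v x) := by rw [this]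
      _ = Real.exp (a ^ 2 * v / 2) * (x * gaussianPDFReal (a * v) v x) := by ring
  rw [h]
  exact (integrable_id_mul_pdf _ _).const_mul _

lemma integral_id_mul_exp_gaussianReal (a : ℝ) (v : ℝ≥0) :
    ∫ x, x * Real.exp (a * x) ∂(gaussianReal 0 v)
      = a * v * Real.exp (a ^ 2 * v / 2) := by
  by_cases hv : v = 0
  · rw [hv, gaussianReal_zero_var, integral_dirac]
    norm_num
  rw [gaussianReal_integral_eq v hv]
  have h : (fun x => gaussianPDFReal 0 v x * (x * Real.exp (a * x)))
      = fun x => Real.exp (a ^ 2 * v / 2) * (x * gaussianPDFReal (a * v) v x) := by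
    funext x
    have := pdf_tilt a hv x
    calc gaussianPDFReal 0 v x * (x * Real.exp (a * x))
        = x * (Real.exp (a * x) * gaussianPDFReal 0 v x) := by ring
      _ = x * (Real.exp (a ^ 2 * v / 2) * gaussianPDFReal (a * v) v x) := by rw [this]
      _ = Real.exp (a ^ 2 * v / 2) * (x * gaussianPDFReal (a * v) v x) := by ring
  rw [h, MeasureTheory.integral_const_mul, integral_id_mul_pdf _ hv]
  ring


variable {Ω : Type*} [MeasurableSpace Ω] {P : Measure Ω} [IsProbabilityMeasure P]
  {W : ℝ → Ω → ℝ}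

lemma law_W (hW : IsStandardBrownianMotion P W) {s : ℝ} (hs : 0 ≤ s) :
    P.map (W s) = gaussianReal 0 s.toNNReal := by
  have h := hW.gauss_incr 0 s le_rfl hs
  have e : (fun ω => W s ω - W 0 ω) = W s := funext fun ω => by rw [hW.init, sub_zero]
  rwa [e, sub_zero] at h

lemma indep_W (hW : IsStandardBrownianMotion P W) {s t : ℝ} (hs : 0 ≤ s) (hst : s ≤ t) :
    IndepFun (W s) (fun ω => W t ω - W s ω) P := by
  have h := hW.indep_incr 0 s s t le_rfl hs le_rfl hst
  have e : (fun ω => W s ω - W 0 ω) = W s := funext fun ω => by rw [hW.init, sub_zero]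
  rwa [e] at h

lemma integrable_comp_W (hW : IsStandardBrownianMotion P W) {s : ℝ} (hs : 0 ≤ s)
    {f : ℝ → ℝ} (hfm : Measurable f) (hfi : Integrable f (gaussianReal 0 s.toNNReal)) :
    Integrable (fun ω => f (W s ω)) P := by
  rw [← law_W hW hs] at hfi
  exact (integrable_map_measure hfm.aestronglyMeasurable
    (hW.measurable s).aemeasurable).mp hfi

lemma integral_comp_W (hW : IsStandardBrownianMotion P W) {s : ℝ} (hs : 0 ≤ s)
    {f : ℝ → ℝ} (hfm : Measurable f) :
    ∫ ω, f (W s ω) ∂P = ∫ x, f x ∂(gaussianReal 0 s.toNNReal) := by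
  rw [← law_W hW hs]
  exact (integral_map (hW.measurable s).aemeasurable hfm.aestronglyMeasurable).symm

lemma integrable_comp_incr (hW : IsStandardBrownianMotion P W) {s t : ℝ} (hs : 0 ≤ s)
    (hst : s ≤ t) {f : ℝ → ℝ} (hfm : Measurable f)
    (hfi : Integrable f (gaussianReal 0 (t - s).toNNReal)) :
    Integrable (fun ω => f (W t ω - W s ω)) P := by
  rw [← hW.gauss_incr s t hs hst] at hfi
  exact (integrable_map_measure hfm.aestronglyMeasurable
    ((hW.measurable t).sub (hW.measurable s)).aemeasurable).mp hfi

lemma integral_comp_incr (hW : IsStandardBrownianMotion P W) {s t : ℝ} (hs : 0 ≤ s)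
    (hst : s ≤ t) {f : ℝ → ℝ} (hfm : Measurable f) :
    ∫ ω, f (W t ω - W s ω) ∂P = ∫ x, f x ∂(gaussianReal 0 (t - s).toNNReal) := by
  rw [← hW.gauss_incr s t hs hst]
  exact (integral_map ((hW.measurable t).sub (hW.measurable s)).aemeasurable
    hfm.aestronglyMeasurable).symm

/-- Exponential moment of a linear combination of `W s` and the increment. -/
lemma expMoment (hW : IsStandardBrownianMotion P W) {s t : ℝ} (hs : 0 ≤ s) (hst : s ≤ t)
    (a b : ℝ) :
    Integrable (fun ω => Real.exp (a * W s ω + b * (W t ω - W s ω))) P ∧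
    ∫ ω, Real.exp (a * W s ω + b * (W t ω - W s ω)) ∂P
      = Real.exp (a ^ 2 * s / 2 + b ^ 2 * (t - s) / 2) := by
  have hfm : Measurable fun x : ℝ => Real.exp (a * x) := by fun_prop
  have hgm : Measurable fun x : ℝ => Real.exp (b * x) := by fun_prop
  have hfX : Integrable (fun ω => Real.exp (a * W s ω)) P :=
    integrable_comp_W hW hs hfm (integrable_exp_gaussianReal a _)
  have hfZ : Integrable (fun ω => Real.exp (b * (W t ω - W s ω))) P :=
    integrable_comp_incr hW hs hst hgm (integrable_exp_gaussianReal b _)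
  have hInd : IndepFun (fun ω => Real.exp (a * W s ω))
      (fun ω => Real.exp (b * (W t ω - W s ω))) P :=
    (indep_W hW hs hst).comp hfm hgm
  have heq : (fun ω => Real.exp (a * W s ω + b * (W t ω - W s ω)))
      = fun ω => Real.exp (a * W s ω) * Real.exp (b * (W t ω - W s ω)) :=
    funext fun ω => Real.exp_add _ _
  constructor
  · rw [heq]; exact hInd.integrable_mul hfX hfZ
  rw [heq]
  have hmul := hInd.integral_fun_mul_eq_mul_integral hfX.aestronglyMeasurable hfZ.aestronglyMeasurable
  have h1 : ∫ ω, Real.exp (a * W s ω) ∂P = Real.exp (a ^ 2 * s / 2) := by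
    rw [integral_comp_W hW hs hfm, integral_exp_gaussianReal,
      Real.coe_toNNReal s hs]
  have h2 : ∫ ω, Real.exp (b * (W t ω - W s ω)) ∂P
      = Real.exp (b ^ 2 * (t - s) / 2) := by
    rw [integral_comp_incr hW hs hst hgm, integral_exp_gaussianReal,
      Real.coe_toNNReal _ (sub_nonneg.mpr hst)]
  calc ∫ ω, Real.exp (a * W s ω) * Real.exp (b * (W t ω - W s ω)) ∂P
      = (∫ ω, Real.exp (a * W s ω) ∂P) * ∫ ω, Real.exp (b * (W t ω - W s ω)) ∂P := hmul
    _ = Real.exp (a ^ 2 * s / 2 + b ^ 2 * (t - s) / 2) := by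
        rw [h1, h2, ← Real.exp_add]

/-- First moment against the exponential weight. -/
lemma xExpMoment (hW : IsStandardBrownianMotion P W) {s t : ℝ} (hs : 0 ≤ s) (hst : s ≤ t)
    (a b : ℝ) :
    Integrable (fun ω => W s ω * Real.exp (a * W s ω + b * (W t ω - W s ω))) P ∧
    ∫ ω, W s ω * Real.exp (a * W s ω + b * (W t ω - W s ω)) ∂P
      = a * s * Real.exp (a ^ 2 * s / 2 + b ^ 2 * (t - s) / 2) := by
  have hfm : Measurable fun x : ℝ => x * Real.exp (a * x) := by fun_prop
  have hgm : Measurable fun x : ℝ => Real.exp (b * x) := by fun_prop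
  have hfX : Integrable (fun ω => W s ω * Real.exp (a * W s ω)) P :=
    integrable_comp_W hW hs hfm (integrable_id_mul_exp_gaussianReal a _)
  have hfZ : Integrable (fun ω => Real.exp (b * (W t ω - W s ω))) P :=
    integrable_comp_incr hW hs hst hgm (integrable_exp_gaussianReal b _)
  have hInd : IndepFun (fun ω => W s ω * Real.exp (a * W s ω))
      (fun ω => Real.exp (b * (W t ω - W s ω))) P :=
    (indep_W hW hs hst).comp hfm hgm
  have heq : (fun ω => W s ω * Real.exp (a * W s ω + b * (W t ω - W s ω)))
      = fun ω => (W s ω * Real.exp (a * W s ω)) * Real.exp (b * (W t ω - W s ω)) :=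
    funext fun ω => by rw [Real.exp_add]; ring
  constructor
  · rw [heq]; exact hInd.integrable_mul hfX hfZ
  rw [heq]
  have hmul := hInd.integral_fun_mul_eq_mul_integral hfX.aestronglyMeasurable hfZ.aestronglyMeasurable
  have h1 : ∫ ω, W s ω * Real.exp (a * W s ω) ∂P
      = a * s * Real.exp (a ^ 2 * s / 2) := by
    rw [integral_comp_W hW hs hfm, integral_id_mul_exp_gaussianReal,
      Real.coe_toNNReal s hs]
  have h2 : ∫ ω, Real.exp (b * (W t ω - W s ω)) ∂P
      = Real.exp (b ^ 2 * (t - s) / 2) := by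
    rw [integral_comp_incr hW hs hst hgm, integral_exp_gaussianReal,
      Real.coe_toNNReal _ (sub_nonneg.mpr hst)]
  calc ∫ ω, (W s ω * Real.exp (a * W s ω)) * Real.exp (b * (W t ω - W s ω)) ∂P
      = (∫ ω, W s ω * Real.exp (a * W s ω) ∂P)
          * ∫ ω, Real.exp (b * (W t ω - W s ω)) ∂P := hmul
    _ = a * s * Real.exp (a ^ 2 * s / 2 + b ^ 2 * (t - s) / 2) := by
        rw [h1, h2, Real.exp_add]; ring


end SDEAux

end SDEAuxSection

open SDEAux

theorem stmt_9 {Ω : Type*} [MeasurableSpace Ω] (P : Measure Ω)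
    [IsProbabilityMeasure P] (W : ℝ → Ω → ℝ)
    (hW : IsStandardBrownianMotion P W) (T : ℝ) (hT : 0 < T)
    (t : ℝ) (ht : t ∈ Ioc 0 T) :
    {ω | Real.log (2 * T / t) ≤ -(1 / t) * ∫ s in (0:ℝ)..t, W s ω} ⊆
      {ω | solutionX W T t ω < 0} ∧
    0 < P {ω | Real.log (2 * T / t) ≤ -(1 / t) * ∫ s in (0:ℝ)..t, W s ω} ∧
    0 < P {ω | solutionX W T t ω < 0} := by
  obtain ⟨ht0, htT⟩ := ht
  set c : ℝ := Real.log (2 * T / t) with hc_def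
  have h2T : (0:ℝ) < 2 * T / t := by positivity
  have h2T1 : (1:ℝ) < 2 * T / t := by
    rw [lt_div_iff₀ ht0]; linarith
  have hc0 : 0 < c := Real.log_pos h2T1
  -- ### Part 1 : the inclusion
  have hsub : {ω | c ≤ -(1 / t) * ∫ s in (0:ℝ)..t, W s ω} ⊆
      {ω | solutionX W T t ω < 0} := by
    intro ω hω
    simp only [mem_setOf_eq] at hω ⊢
    have contW : Continuous fun s => W s ω := hW.cont_paths ω
    set μt : Measure ℝ := volume.restrict (Ioc (0:ℝ) t) with hμt_def
    haveI : IsFiniteMeasure μt := by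
      constructor
      rw [hμt_def, Measure.restrict_apply_univ, Real.volume_Ioc]
      exact ENNReal.ofReal_lt_top
    haveI : NeZero μt := by
      constructor
      rw [hμt_def]
      intro h
      rw [Measure.restrict_eq_zero, Real.volume_Ioc] at h
      rw [ENNReal.ofReal_eq_zero] at h
      linarith
    have hμtuniv : (μt univ).toReal = t := by
      rw [hμt_def, Measure.restrict_apply_univ, Real.volume_Ioc, sub_zero,
        ENNReal.toReal_ofReal ht0.le]
    have hfi : Integrable (fun s => -W s ω) μt :=
      (contW.neg.continuousOn (s := Icc 0 t)).integrableOn_Icc.mono_set Ioc_subset_Icc_self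
    have hgi : Integrable (Real.exp ∘ fun s => -W s ω) μt :=
      ((Real.continuous_exp.comp contW.neg).continuousOn
        (s := Icc 0 t)).integrableOn_Icc.mono_set Ioc_subset_Icc_self
    have hJ := convexOn_exp.map_average_le Real.continuous_exp.continuousOn isClosed_univ
      (Filter.Eventually.of_forall fun x => mem_univ _) hfi hgi
    rw [average_eq, average_eq, measureReal_def, hμtuniv, smul_eq_mul, smul_eq_mul] at hJ
    have hIoc_neg : ∫ s in Ioc (0:ℝ) t, -W s ω = -∫ s in (0:ℝ)..t, W s ω := by
      rw [MeasureTheory.integral_neg, integral_of_le ht0.le]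
    rw [hμt_def] at hJ
    rw [hIoc_neg] at hJ
    -- exp c ≤ t⁻¹ * ∫ exp(-W)
    have hcexp : Real.exp c ≤ t⁻¹ * ∫ s in Ioc (0:ℝ) t, Real.exp (-W s ω) := by
      refine le_trans ?_ (le_trans hJ ?_)
      · apply Real.exp_le_exp.mpr
        calc c ≤ -(1 / t) * ∫ s in (0:ℝ)..t, W s ω := hω
          _ = t⁻¹ * -∫ s in (0:ℝ)..t, W s ω := by rw [one_div]; ring
      · apply le_of_eq
        congr 1
    have hexpc : Real.exp c = 2 * T / t := Real.exp_log h2T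
    have h2TJ : 2 * T ≤ ∫ s in Ioc (0:ℝ) t, Real.exp (-W s ω) := by
      rw [hexpc] at hcexp
      have h' := mul_le_mul_of_nonneg_left hcexp ht0.le
      rw [mul_div_cancel₀ _ ht0.ne', ← mul_assoc, mul_inv_cancel₀ ht0.ne', one_mul] at h'
      exact h'
    have hJI : ∫ s in (0:ℝ)..t, Real.exp (-W s ω)
        < ∫ s in (0:ℝ)..t, Real.exp (s / 2 - W s ω) := by
      apply integral_lt_integral_of_continuousOn_of_le_of_exists_lt ht0
      · exact (Real.continuous_exp.comp contW.neg).continuousOn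
      · exact (Real.continuous_exp.comp
          ((continuous_id.div_const 2).sub contW)).continuousOn
      · intro s hs
        apply Real.exp_le_exp.mpr
        have : 0 < s := hs.1
        linarith
      · refine ⟨t, ⟨ht0.le, le_rfl⟩, Real.exp_lt_exp.mpr ?_⟩
        linarith
    have h2TI : 2 * T < ∫ s in (0:ℝ)..t, Real.exp (s / 2 - W s ω) := by
      rw [integral_of_le ht0.le] at hJI
      exact lt_of_le_of_lt h2TJ hJI
    unfold solutionX
    exact mul_neg_of_pos_of_neg (Real.exp_pos _) (by linarith)
  -- ### Part 2 : positivity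
  have hpos : 0 < P {ω | c ≤ -(1 / t) * ∫ s in (0:ℝ)..t, W s ω} := by
    by_contra hcon
    push_neg at hcon
    have hP0 : P {ω | c ≤ -(1 / t) * ∫ s in (0:ℝ)..t, W s ω} = 0 :=
      le_antisymm (le_of_not_gt (by simpa using hcon)) zero_le
    have hae : ∀ᵐ ω ∂P, ¬ (c ≤ -(1 / t) * ∫ s in (0:ℝ)..t, W s ω) := by
      rw [ae_iff]
      simpa using hP0
    set θ : ℝ := 2 * (c + 1) / t with hθ_def
    have hθ0 : 0 < θ := by positivity
    set K : ℝ := Real.exp (θ ^ 2 * t / 2) with hK_def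
    have hK0 : 0 < K := Real.exp_pos _
    -- the exponential weight
    have hE0 : Integrable (fun ω => Real.exp (-θ * W t ω)) P ∧
        ∫ ω, Real.exp (-θ * W t ω) ∂P = K := by
      have h := expMoment hW (le_of_lt ht0) (le_refl t) (-θ) 0
      have e1 : (fun ω => Real.exp (-θ * W t ω + 0 * (W t ω - W t ω)))
          = fun ω => Real.exp (-θ * W t ω) := by funext ω; norm_num
      rw [e1] at h
      refine ⟨h.1, ?_⟩
      have e2 : (-θ) ^ 2 * t / 2 + 0 ^ 2 * (t - t) / 2 = θ ^ 2 * t / 2 := by ring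
      rw [h.2, e2, hK_def]
    -- for each s ∈ (0, t] : value of the weighted first moment
    have hE1 : ∀ s : ℝ, 0 ≤ s → s ≤ t →
        (Integrable (fun ω => W s ω * Real.exp (-θ * W t ω)) P ∧
         ∫ ω, W s ω * Real.exp (-θ * W t ω) ∂P = -θ * s * K) := by
      intro s hs hst
      have h := xExpMoment hW hs hst (-θ) (-θ)
      have e1 : (fun ω => W s ω * Real.exp (-θ * W s ω + -θ * (W t ω - W s ω)))
          = fun ω => W s ω * Real.exp (-θ * W t ω) := by
        funext ω; congr 1; ring
      rw [e1] at h
      refine ⟨h.1, ?_⟩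
      have e2 : (-θ) ^ 2 * s / 2 + (-θ) ^ 2 * (t - s) / 2 = θ ^ 2 * t / 2 := by ring
      rw [h.2, e2, hK_def]
    -- uniform bound for the norm integral
    have hC : ∀ s : ℝ, 0 ≤ s → s ≤ t →
        ∫ ω, ‖W s ω * Real.exp (-θ * W t ω)‖ ∂P
          ≤ 2 * Real.exp ((1 + θ) ^ 2 * t / 2) := by
      intro s hs hst
      have hplus := expMoment hW hs hst (1 - θ) (-θ)
      have hminus := expMoment hW hs hst (-1 - θ) (-θ)
      have hbound : ∀ ω, ‖W s ω * Real.exp (-θ * W t ω)‖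
          ≤ Real.exp ((1 - θ) * W s ω + -θ * (W t ω - W s ω))
            + Real.exp ((-1 - θ) * W s ω + -θ * (W t ω - W s ω)) := by
        intro ω
        have habs : |W s ω| ≤ Real.exp (W s ω) + Real.exp (-W s ω) := by
          have h1 := Real.add_one_le_exp (W s ω)
          have h2 := Real.add_one_le_exp (-W s ω)
          have h3 := Real.exp_pos (W s ω)
          have h4 := Real.exp_pos (-W s ω)
          rw [abs_le]; constructor <;> nlinarith
        have hexp : Real.exp ((1 - θ) * W s ω + -θ * (W t ω - W s ω))
            = Real.exp (W s ω) * Real.exp (-θ * W t ω) := by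
          rw [← Real.exp_add]; ring_nf
        have hexp2 : Real.exp ((-1 - θ) * W s ω + -θ * (W t ω - W s ω))
            = Real.exp (-W s ω) * Real.exp (-θ * W t ω) := by
          rw [← Real.exp_add]; ring_nf
        rw [norm_mul, Real.norm_eq_abs, Real.norm_eq_abs, Real.abs_exp, hexp, hexp2,
          ← add_mul]
        exact mul_le_mul_of_nonneg_right habs (Real.exp_pos _).le
      have hadd : Integrable (fun ω => Real.exp ((1 - θ) * W s ω + -θ * (W t ω - W s ω))
          + Real.exp ((-1 - θ) * W s ω + -θ * (W t ω - W s ω))) P := hplus.1.add hminus.1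
      have hmono := integral_mono_of_nonneg
        (Filter.Eventually.of_forall fun ω => norm_nonneg (W s ω * Real.exp (-θ * W t ω)))
        hadd (Filter.Eventually.of_forall hbound)
      refine le_trans hmono ?_
      rw [integral_add hplus.1 hminus.1, hplus.2, hminus.2]
      have hb1 : (1 - θ) ^ 2 * s / 2 + (-θ) ^ 2 * (t - s) / 2 ≤ (1 + θ) ^ 2 * t / 2 := by
        nlinarith [mul_nonneg hθ0.le hs, mul_nonneg hθ0.le (sub_nonneg.mpr hst),
          sub_nonneg.mpr hst]
      have hb2 : (-1 - θ) ^ 2 * s / 2 + (-θ) ^ 2 * (t - s) / 2 ≤ (1 + θ) ^ 2 * t / 2 := by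
        nlinarith [mul_nonneg hθ0.le hs, mul_nonneg hθ0.le (sub_nonneg.mpr hst),
          sub_nonneg.mpr hst]
      have := Real.exp_le_exp.mpr hb1
      have := Real.exp_le_exp.mpr hb2
      linarith
    -- Fubini
    set μt : Measure ℝ := volume.restrict (Ioc (0:ℝ) t) with hμt_def
    have hWm : Measurable (Function.uncurry W) :=
      measurable_uncurry_of_continuous_of_measurable hW.cont_paths hW.measurable
    set f : ℝ → Ω → ℝ := fun s ω => W s ω * Real.exp (-θ * W t ω) with hf_def
    have hfm : AEStronglyMeasurable (Function.uncurry f) (μt.prod P) := by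
      apply Measurable.aestronglyMeasurable
      apply Measurable.mul
      · exact hWm
      · exact (((hW.measurable t).comp measurable_snd).const_mul (-θ)).exp
    have hint : Integrable (Function.uncurry f) (μt.prod P) := by
      rw [integrable_prod_iff hfm]
      constructor
      · filter_upwards [ae_restrict_mem measurableSet_Ioc] with s hs
        exact (hE1 s hs.1.le hs.2).1
      · apply Integrable.mono' (integrable_const (2 * Real.exp ((1 + θ) ^ 2 * t / 2)))
        · exact hfm.norm.integral_prod_right'
        · filter_upwards [ae_restrict_mem measurableSet_Ioc] with s hs
          rw [Real.norm_of_nonneg (integral_nonneg fun ω => norm_nonneg _)]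
          exact hC s hs.1.le hs.2
    have hswap := integral_integral_swap hint
    -- identify both sides
    have hRHS : ∫ s, ∫ ω, f s ω ∂P ∂μt = -θ * (t ^ 2 / 2) * K := by
      have hcongr : ∀ s ∈ Ioc (0:ℝ) t, ∫ ω, f s ω ∂P = -θ * K * s := by
        intro s hs
        rw [hf_def]
        rw [(hE1 s hs.1.le hs.2).2]
        ring
      rw [hμt_def]
      rw [setIntegral_congr_fun measurableSet_Ioc hcongr]
      rw [← integral_of_le ht0.le, intervalIntegral.integral_const_mul, integral_id]
      ring
    have hΦe : (fun ω => (∫ s in (0:ℝ)..t, W s ω) * Real.exp (-θ * W t ω))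
        = fun ω => ∫ s, f s ω ∂μt := by
      funext ω
      rw [hμt_def, integral_of_le ht0.le, ← MeasureTheory.integral_mul_const]
    have hIntΦe : Integrable
        (fun ω => (∫ s in (0:ℝ)..t, W s ω) * Real.exp (-θ * W t ω)) P := by
      rw [hΦe]
      exact hint.integral_prod_right
    have hValΦe : ∫ ω, (∫ s in (0:ℝ)..t, W s ω) * Real.exp (-θ * W t ω) ∂P
        = -θ * (t ^ 2 / 2) * K := by
      rw [hΦe, ← hswap, hRHS]
    -- the final functional
    have hFint : Integrable (fun ω =>
        (-(1 / t) * (∫ s in (0:ℝ)..t, W s ω) - c) * Real.exp (-θ * W t ω)) P := by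
      have e : (fun ω =>
          (-(1 / t) * (∫ s in (0:ℝ)..t, W s ω) - c) * Real.exp (-θ * W t ω))
          = fun ω => (-(1 / t)) * ((∫ s in (0:ℝ)..t, W s ω) * Real.exp (-θ * W t ω))
              - c * Real.exp (-θ * W t ω) := by
        funext ω; ring
      rw [e]
      exact (hIntΦe.const_mul _).sub (hE0.1.const_mul c)
    have hFval : ∫ ω, (-(1 / t) * (∫ s in (0:ℝ)..t, W s ω) - c)
        * Real.exp (-θ * W t ω) ∂P = K := by
      have e : (fun ω =>
          (-(1 / t) * (∫ s in (0:ℝ)..t, W s ω) - c) * Real.exp (-θ * W t ω))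
          = fun ω => (-(1 / t)) * ((∫ s in (0:ℝ)..t, W s ω) * Real.exp (-θ * W t ω))
              - c * Real.exp (-θ * W t ω) := by
        funext ω; ring
      rw [e, integral_sub (hIntΦe.const_mul _) (hE0.1.const_mul c),
        MeasureTheory.integral_const_mul, MeasureTheory.integral_const_mul, hValΦe, hE0.2]
      rw [hθ_def]
      field_simp
      ring
    have hFnonpos : ∫ ω, (-(1 / t) * (∫ s in (0:ℝ)..t, W s ω) - c)
        * Real.exp (-θ * W t ω) ∂P ≤ 0 := by
      apply integral_nonpos_of_ae
      filter_upwards [hae] with ω hω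
      have h1 : -(1 / t) * (∫ s in (0:ℝ)..t, W s ω) - c < 0 := by
        rw [not_le] at hω; linarith
      exact mul_nonpos_of_nonpos_of_nonneg h1.le (Real.exp_pos _).le
    rw [hFval] at hFnonpos
    linarith
  exact ⟨hsub, hpos, lt_of_lt_of_le hpos (measure_mono hsub)⟩
end

section
/- Let Y : [0,T] → ℝ be continuous with Y(t) = 1 + (t−1)∫_t^T Y(s) ds for all t ∈ [0,T]. Then Y(0) = 1 − ∫₀^T e^{τ²/2 − τ} dτ, and for T sufficiently large Y(0) < 0. -/
open Real Set intervalIntegral MeasureTheory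

lemma key (T : ℝ) (hT : 0 < T) (Y : ℝ → ℝ) (hY : ContinuousOn Y (Icc 0 T))
    (heq : ∀ t ∈ Icc 0 T, Y t = 1 + (t - 1) * ∫ s in t..T, Y s) :
    Y 0 = 1 - ∫ τ in (0:ℝ)..T, Real.exp (τ ^ 2 / 2 - τ) := by
  have huIcc : uIcc (0:ℝ) T = Icc 0 T := uIcc_of_le hT.le
  set y : ℝ → ℝ := fun t => ∫ s in t..T, Y s with hy_def
  have hYint : IntervalIntegrable Y volume 0 T := (huIcc ▸ hY).intervalIntegrable
  have hycont : ContinuousOn y (Icc 0 T) := by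
    have h := (intervalIntegral.continuousOn_primitive_interval'
      (μ := volume) (f := Y) hYint (right_mem_uIcc)).neg
    rw [huIcc] at h
    refine h.congr fun t ht => ?_
    simp [hy_def, intervalIntegral.integral_symm T t]
  set G : ℝ → ℝ := fun t => Real.exp ((t - 1) ^ 2 / 2) * y t with hG_def
  have hGcont : ContinuousOn G (Icc 0 T) :=
    (Real.continuous_exp.comp (by continuity)).continuousOn.mul hycont
  have hderiv : ∀ t ∈ Ioo 0 T, HasDerivWithinAt G (-Real.exp ((t - 1) ^ 2 / 2)) (Ioi t) t := by
    intro t ht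
    have htI : Icc (0:ℝ) T ∈ nhds t := Icc_mem_nhds ht.1 ht.2
    have hYct : ContinuousAt Y t := hY.continuousAt htI
    have hmeas : StronglyMeasurableAtFilter Y (nhds t) volume :=
      ⟨Icc 0 T, htI, hY.aestronglyMeasurable measurableSet_Icc⟩
    have hint : IntervalIntegrable Y volume T t :=
      (hY.mono (uIcc_subset_Icc ⟨hT.le, le_rfl⟩ ⟨ht.1.le, ht.2.le⟩)).intervalIntegrable
    have h1 : HasDerivAt (fun u => ∫ s in T..u, Y s) (Y t) t :=
      intervalIntegral.integral_hasDerivAt_right hint hmeas hYct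
    have h2 : HasDerivAt y (-Y t) t := by
      have := h1.neg
      refine this.congr_of_eventuallyEq (Filter.Eventually.of_forall fun u => ?_)
      simp [hy_def, intervalIntegral.integral_symm T u]
    have h3 : HasDerivAt (fun u : ℝ => Real.exp ((u - 1) ^ 2 / 2))
        ((t - 1) * Real.exp ((t - 1) ^ 2 / 2)) t := by
      have hp : HasDerivAt (fun u : ℝ => (u - 1) ^ 2 / 2) (t - 1) t := by
        have : HasDerivAt (fun u : ℝ => (u - 1) ^ 2 / 2) ((2:ℕ) * (t - 1) ^ (2 - 1) * 1 / 2) t :=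
          (((hasDerivAt_id t).sub_const 1).pow 2).div_const 2
        convert this using 1
        ring
      simpa [mul_comm] using hp.exp
    have h4 : HasDerivAt G ((t - 1) * Real.exp ((t - 1) ^ 2 / 2) * y t +
        Real.exp ((t - 1) ^ 2 / 2) * (-Y t)) t := h3.mul h2
    have hYt : Y t = 1 + (t - 1) * y t := heq t ⟨ht.1.le, ht.2.le⟩
    have : (t - 1) * Real.exp ((t - 1) ^ 2 / 2) * y t +
        Real.exp ((t - 1) ^ 2 / 2) * (-Y t) = -Real.exp ((t - 1) ^ 2 / 2) := by
      rw [hYt]; ring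
    rw [this] at h4
    exact h4.hasDerivWithinAt
  have hintexp : IntervalIntegrable (fun t : ℝ => -Real.exp ((t - 1) ^ 2 / 2)) volume 0 T :=
    (Continuous.intervalIntegrable (by continuity) 0 T)
  have hftc := intervalIntegral.integral_eq_sub_of_hasDeriv_right_of_le hT.le hGcont hderiv hintexp
  have hGT : G T = 0 := by simp [hG_def, hy_def]
  have hG0 : G 0 = Real.exp (1 / 2) * y 0 := by norm_num [hG_def]
  rw [hGT, hG0, intervalIntegral.integral_neg] at hftc
  have hftc' : (∫ t in (0:ℝ)..T, Real.exp ((t - 1) ^ 2 / 2)) = Real.exp (1 / 2) * y 0 := by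
    linarith
  have hy0 : y 0 = Real.exp (-(1 / 2)) * ∫ t in (0:ℝ)..T, Real.exp ((t - 1) ^ 2 / 2) := by
    rw [hftc', ← mul_assoc, ← Real.exp_add]
    norm_num
  have hrw : (∫ t in (0:ℝ)..T, Real.exp (-(1 / 2)) * Real.exp ((t - 1) ^ 2 / 2))
      = ∫ τ in (0:ℝ)..T, Real.exp (τ ^ 2 / 2 - τ) := by
    refine intervalIntegral.integral_congr fun x _ => ?_
    rw [← Real.exp_add]
    congr 1
    ring
  have hy0' : y 0 = ∫ τ in (0:ℝ)..T, Real.exp (τ ^ 2 / 2 - τ) := by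
    rw [hy0, ← hrw, intervalIntegral.integral_const_mul]
  have h0 : Y 0 = 1 + (0 - 1) * y 0 := heq 0 ⟨le_rfl, hT.le⟩
  rw [h0, hy0']
  ring

theorem stmt_12 :
    (∀ T : ℝ, 0 < T → ∀ Y : ℝ → ℝ, ContinuousOn Y (Icc 0 T) →
      (∀ t ∈ Icc 0 T, Y t = 1 + (t - 1) * ∫ s in t..T, Y s) →
      Y 0 = 1 - ∫ τ in (0:ℝ)..T, Real.exp (τ ^ 2 / 2 - τ)) ∧
    ∃ T₀ : ℝ, ∀ T : ℝ, T₀ ≤ T → ∀ Y : ℝ → ℝ, ContinuousOn Y (Icc 0 T) →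
      (∀ t ∈ Icc 0 T, Y t = 1 + (t - 1) * ∫ s in t..T, Y s) →
      Y 0 < 0 := by
  constructor
  · exact key
  · refine ⟨4, fun T hT Y hY heq => ?_⟩
    have hT0 : (0:ℝ) < T := by linarith
    rw [key T hT0 Y hY heq]
    have hcf : ∀ a b : ℝ, IntervalIntegrable (fun τ : ℝ => Real.exp (τ ^ 2 / 2 - τ)) volume a b :=
      fun a b => Continuous.intervalIntegrable (by continuity) a b
    have h1 : (∫ τ in (0:ℝ)..2, Real.exp (τ ^ 2 / 2 - τ)) ≥ 0 :=
      intervalIntegral.integral_nonneg (by norm_num) (fun x _ => (Real.exp_pos _).le)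
    have h2 : (∫ τ in (2:ℝ)..4, Real.exp (τ ^ 2 / 2 - τ)) ≥ 2 := by
      have : (∫ τ in (2:ℝ)..4, (1:ℝ)) ≤ ∫ τ in (2:ℝ)..4, Real.exp (τ ^ 2 / 2 - τ) := by
        apply intervalIntegral.integral_mono_on (by norm_num)
          (by simp) (hcf 2 4)
        intro x hx
        rw [show (1:ℝ) = Real.exp 0 by simp]
        apply Real.exp_le_exp.2
        nlinarith [hx.1, hx.2]
      simp at this
      linarith
    have h3 : (∫ τ in (4:ℝ)..T, Real.exp (τ ^ 2 / 2 - τ)) ≥ 0 :=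
      intervalIntegral.integral_nonneg hT (fun x _ => (Real.exp_pos _).le)
    have hsplit : (∫ τ in (0:ℝ)..T, Real.exp (τ ^ 2 / 2 - τ))
        = (∫ τ in (0:ℝ)..2, Real.exp (τ ^ 2 / 2 - τ))
        + (∫ τ in (2:ℝ)..4, Real.exp (τ ^ 2 / 2 - τ))
        + (∫ τ in (4:ℝ)..T, Real.exp (τ ^ 2 / 2 - τ)) := by
      rw [intervalIntegral.integral_add_adjacent_intervals (hcf 0 2) (hcf 2 4),
        intervalIntegral.integral_add_adjacent_intervals (hcf 0 4) (hcf 4 T)]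
    linarith
end

section
/- Let A : [0,T]² → ℝ be continuous with A(t,s) ≥ 0, and ψ : [0,T] → ℝ continuous with ψ nonincreasing and ψ(t) ≥ 0. If additionally t ↦ A(t,s) is nonincreasing in t (i.e., A(t,s) ≥ A(τ,s) for t ≤ τ), then the unique continuous solution of the deterministic backward Volterra equation Y(t) = ψ(t) + ∫_t^T A(t,s) Y(s) ds satisfies Y(t) ≥ 0 for all t ∈ [0,T]. -/
open Set intervalIntegral

theorem stmt_16 (T : ℝ) (hT : 0 < T) (A : ℝ → ℝ → ℝ)
    (hAcont : ContinuousOn (fun p : ℝ × ℝ => A p.1 p.2) (Icc 0 T ×ˢ Icc 0 T))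
    (hAnonneg : ∀ t ∈ Icc 0 T, ∀ s ∈ Icc 0 T, 0 ≤ A t s)
    (hAmono : ∀ t ∈ Icc 0 T, ∀ τ ∈ Icc 0 T, ∀ s ∈ Icc 0 T,
      t ≤ τ → A τ s ≤ A t s)
    (ψ : ℝ → ℝ) (hψcont : ContinuousOn ψ (Icc 0 T))
    (hψnonneg : ∀ t ∈ Icc 0 T, 0 ≤ ψ t)
    (hψmono : ∀ t ∈ Icc 0 T, ∀ τ ∈ Icc 0 T, t ≤ τ → ψ τ ≤ ψ t)
    (Y : ℝ → ℝ) (hYcont : ContinuousOn Y (Icc 0 T))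
    (heq : ∀ t ∈ Icc 0 T, Y t = ψ t + ∫ s in t..T, A t s * Y s) :
    ∀ t ∈ Icc 0 T, 0 ≤ Y t := by
  -- bound on A
  obtain ⟨M₀, hM₀⟩ := ((isCompact_Icc.prod isCompact_Icc).exists_bound_of_continuousOn hAcont)
  set M : ℝ := max M₀ 0 with hMdef
  have hM0 : 0 ≤ M := le_max_right _ _
  have hMA : ∀ t ∈ Icc (0:ℝ) T, ∀ s ∈ Icc (0:ℝ) T, A t s ≤ M := by
    intro t ht s hs
    have := hM₀ (t, s) ⟨ht, hs⟩
    calc A t s ≤ |A t s| := le_abs_self _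
      _ ≤ M₀ := by simpa using this
      _ ≤ M := le_max_left _ _
  -- clamp function
  set c : ℝ → ℝ := fun t => max 0 (min t T) with hcdef
  have hcmem : ∀ t, c t ∈ Icc (0:ℝ) T := fun t =>
    ⟨le_max_left _ _, max_le hT.le (min_le_right _ _)⟩
  have hccont : Continuous c := continuous_const.max (continuous_id.min continuous_const)
  have hcid : ∀ t ∈ Icc (0:ℝ) T, c t = t := by
    intro t ht; simp [hcdef, min_eq_left ht.2, max_eq_right ht.1]
  -- negative part, continuously extended
  set N : ℝ → ℝ := fun t => max (-(Y (c t))) 0 with hNdef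
  have hNcont : Continuous N := by
    have : Continuous (Y ∘ c) := hYcont.comp_continuous hccont hcmem
    exact (this.neg).max continuous_const
  have hNnonneg : ∀ t, 0 ≤ N t := fun t => le_max_right _ _
  have hNge : ∀ t, -(N t) ≤ Y (c t) := by
    intro t
    have : -(Y (c t)) ≤ N t := le_max_left _ _
    linarith
  -- g
  set g : ℝ → ℝ := fun t => ∫ s in t..T, N s with hgdef
  have hNint : ∀ a b : ℝ, IntervalIntegrable N MeasureTheory.volume a b :=
    fun a b => hNcont.intervalIntegrable a b
  have hgnonneg : ∀ t ∈ Icc (0:ℝ) T, 0 ≤ g t := by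
    intro t ht
    exact intervalIntegral.integral_nonneg ht.2 (fun s _ => hNnonneg s)
  -- key inequality
  have hkey : ∀ t ∈ Icc (0:ℝ) T, N t ≤ M * g t := by
    intro t ht
    rcases le_or_gt 0 (Y t) with hY | hY
    · have : N t = 0 := by
        have := hcid t ht
        simp [hNdef, this, max_eq_right (neg_nonpos_of_nonneg hY)]
      rw [this]
      exact mul_nonneg hM0 (hgnonneg t ht)
    · have hNt : N t = -(Y t) := by
        rw [hNdef]; simp only [hcid t ht]
        exact max_eq_left (by linarith)
      have hsub : Icc t T ⊆ Icc (0:ℝ) T := Icc_subset_Icc ht.1 le_rfl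
      have hsub' : uIcc t T ⊆ Icc (0:ℝ) T := by
        rw [uIcc_of_le ht.2]; exact hsub
      have hAYcont : ContinuousOn (fun s => A t s * Y s) (Icc (0:ℝ) T) := by
        apply ContinuousOn.mul _ hYcont
        have : ContinuousOn (fun s : ℝ => ((t, s) : ℝ × ℝ)) (Icc (0:ℝ) T) :=
          (continuous_const.prodMk continuous_id).continuousOn
        exact hAcont.comp this (fun s hs => ⟨ht, hs⟩)
      have hAYint : IntervalIntegrable (fun s => A t s * Y s) MeasureTheory.volume t T :=
        (hAYcont.mono hsub').intervalIntegrable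
      have hmono : ∫ s in t..T, A t s * Y s ≥ ∫ s in t..T, (-M) * N s := by
        apply intervalIntegral.integral_mono_on ht.2 ((hNint t T).const_mul _) hAYint
        intro s hs
        have hs' := hsub hs
        have h1 : -(N s) ≤ Y s := by
          have := hNge s; rwa [hcid s hs'] at this
        calc (-M) * N s ≤ (-(A t s)) * N s := by
              apply mul_le_mul_of_nonneg_right _ (hNnonneg s)
              simpa using hMA t ht s hs'
          _ = A t s * (-(N s)) := by ring
          _ ≤ A t s * Y s := mul_le_mul_of_nonneg_left h1 (hAnonneg t ht s hs')
      have heqt := heq t ht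
      have : ∫ s in t..T, (-M) * N s = -(M * g t) := by
        rw [intervalIntegral.integral_const_mul, hgdef]; ring
      rw [this] at hmono
      have hψt := hψnonneg t ht
      linarith [hNt ▸ le_refl (N t), heqt ▸ le_refl (Y t), hmono, hNt.ge]
  -- derivative of g
  have hg' : ∀ t : ℝ, HasDerivAt g (-(N t)) t := by
    intro t
    exact intervalIntegral.integral_hasDerivAt_left (hNint t T)
      (hNcont.stronglyMeasurable.stronglyMeasurableAtFilter) hNcont.continuousAt
  -- h = g * exp(M t)
  set h : ℝ → ℝ := fun t => g t * Real.exp (M * t) with hhdef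
  have hh' : ∀ t : ℝ, HasDerivAt h ((M * g t - N t) * Real.exp (M * t)) t := by
    intro t
    have h1 : HasDerivAt (fun t => Real.exp (M * t)) (Real.exp (M * t) * M) t := by
      simpa using ((hasDerivAt_id t).const_mul M).exp
    have : HasDerivAt (fun y => g y * Real.exp (M * y))
        (-(N t) * Real.exp (M * t) + g t * (Real.exp (M * t) * M)) t := (hg' t).mul h1
    convert this using 1; ring
  have hhdiff : Differentiable ℝ h := fun t => (hh' t).differentiableAt
  have hhmono : MonotoneOn h (Icc 0 T) := by
    apply monotoneOn_of_deriv_nonneg (convex_Icc 0 T) hhdiff.continuous.continuousOn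
      (fun t _ => (hhdiff t).differentiableWithinAt)
    intro t htmem
    rw [interior_Icc] at htmem
    have ht : t ∈ Icc (0:ℝ) T := ⟨htmem.1.le, htmem.2.le⟩
    rw [(hh' t).deriv]
    have := hkey t ht
    exact mul_nonneg (by linarith) (Real.exp_nonneg _)
  have hgT : g T = 0 := by simp [hgdef]
  have hgzero : ∀ t ∈ Icc (0:ℝ) T, g t = 0 := by
    intro t ht
    have h1 : h t ≤ h T := hhmono ht (right_mem_Icc.mpr (by linarith [ht.1, hT.le]; )) ht.2
    have h2 : h T = 0 := by simp [hhdef, hgT]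
    have h3 : 0 ≤ h t := mul_nonneg (hgnonneg t ht) (Real.exp_nonneg _)
    have h4 : h t = 0 := le_antisymm (h2 ▸ h1) h3
    have h5 : Real.exp (M * t) ≠ 0 := (Real.exp_pos _).ne'
    have := mul_eq_zero.mp h4
    tauto
  intro t ht
  have hN0 : N t = 0 := le_antisymm (by
      have := hkey t ht
      rw [hgzero t ht] at this
      simpa using this) (hNnonneg t)
  have : -(Y t) ≤ 0 := by
    have h1 : -(Y (c t)) ≤ N t := le_max_left _ _
    rw [hcid t ht] at h1
    linarith [hN0 ▸ h1]
  linarith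
end
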